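/- arXiv:1711.01536 — 5 statements merged into one kernel-verified Lean document; each statement's English description precedes it below -/
import Mathlib

section
/- For every natural number n, ∫_0^4 x^n · (1/(2π)) · √((4-x)/x) dx = C_n, the n-th Catalan number. -/
open Real
open MeasureTheory Set intervalIntegral

private lemma W_even (n : ℕ) :
    ∫ θ in (0:ℝ)..(π/2), Real.sin θ ^ (2*n) = π/2 * Nat.centralBinom n / 4^n := by
  induction n with
  | zero => simp
  | succ n ih =>
    have h := integral_sin_pow (a := 0) (b := π/2) (2*n)
    rw [Real.sin_zero, Real.cos_pi_div_two] at h
    have h2 : 2 * (n+1) = 2*n + 2 := by ring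
    rw [h2, h, ih]
    have hcb : ((n:ℝ) + 1) * Nat.centralBinom (n+1) = 2 * (2*n+1) * Nat.centralBinom n := by
      exact_mod_cast congrArg (Nat.cast : ℕ → ℝ) (Nat.succ_mul_centralBinom_succ n)
    have hn1 : ((n:ℝ) + 1) ≠ 0 := by positivity
    have hcb' : (Nat.centralBinom (n+1) : ℝ) = 2 * (2*n+1) * Nat.centralBinom n / ((n:ℝ)+1) := by
      field_simp at hcb ⊢; linarith [hcb]
    push_cast
    rw [hcb']
    have h4 : (4:ℝ)^(n+1) = 4^n * 4 := by ring
    field_simp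
    ring

theorem catalan_density_moments (n : ℕ) :
    ∫ x in (0:ℝ)..4, x ^ n * (1 / (2 * π)) * Real.sqrt ((4 - x) / x) = catalan n := by
  have hpi : (0:ℝ) < π := Real.pi_pos
  set g : ℝ → ℝ := fun x => x ^ n * (1 / (2 * π)) * Real.sqrt ((4 - x) / x) with hg
  set f : ℝ → ℝ := fun θ => 4 * Real.sin θ ^ 2 with hf
  set f' : ℝ → ℝ := fun θ => 8 * Real.sin θ * Real.cos θ with hf'
  set H : ℝ → ℝ := fun θ => 4^n * (4/π) * (Real.sin θ ^ (2*n) * Real.cos θ ^ 2) with hH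
  have hab : (0:ℝ) ≤ π/2 := by positivity
  -- derivative
  have hderiv : ∀ θ : ℝ, HasDerivAt f (f' θ) θ := by
    intro θ
    have := ((Real.hasDerivAt_sin θ).pow 2).const_mul (4:ℝ)
    have e : f' θ = 4 * (((2:ℕ):ℝ) * Real.sin θ ^ (2 - 1) * Real.cos θ) := by simp [hf']; ring
    rw [e]; exact this
  -- equality of substituted integrand with H on Ioc
  have hEq : ∀ θ ∈ Ioc (0:ℝ) (π/2), f' θ • (g ∘ f) θ = H θ := by
    intro θ hθ
    have hsin : 0 < Real.sin θ :=
      Real.sin_pos_of_pos_of_lt_pi hθ.1 (lt_of_le_of_lt hθ.2 (by linarith))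
    have hcos : 0 ≤ Real.cos θ :=
      Real.cos_nonneg_of_mem_Icc ⟨by linarith [hθ.1], hθ.2⟩
    have h1 : (4 - 4 * Real.sin θ ^ 2) / (4 * Real.sin θ ^ 2)
        = (Real.cos θ / Real.sin θ) ^ 2 := by
      have : (4:ℝ) - 4 * Real.sin θ ^ 2 = 4 * Real.cos θ ^ 2 := by
        have := Real.sin_sq_add_cos_sq θ; nlinarith
      rw [this, div_pow]
      field_simp
    simp only [hf, hf', hg, hH, Function.comp, smul_eq_mul]
    rw [h1, Real.sqrt_sq (div_nonneg hcos hsin.le)]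
    have hsn : Real.sin θ ≠ 0 := hsin.ne'
    rw [mul_pow, ← pow_mul]
    field_simp
    ring
  -- integrability of H-like things
  have hHcont : Continuous H := by fun_prop
  -- integrability of g on Icc 0 4
  have hg1 : IntegrableOn g (Icc (0:ℝ) 4) := by
    rw [integrableOn_Icc_iff_integrableOn_Ioc]
    have hB : IntegrableOn (fun x : ℝ => 4^n * (1/π) * x ^ (-(1/2) : ℝ)) (Ioc (0:ℝ) 4) := by
      have := (intervalIntegrable_rpow' (a := 0) (b := 4) (r := -(1/2)) (by norm_num))
      rw [intervalIntegrable_iff, uIoc_of_le (by norm_num : (0:ℝ) ≤ 4)] at this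
      exact this.const_mul _
    refine Integrable.mono' hB ?_ ?_
    · apply Measurable.aestronglyMeasurable
      apply Measurable.mul
      · exact (measurable_id.pow_const n).mul measurable_const
      · exact (measurable_const.sub measurable_id |>.div measurable_id).sqrt
    · filter_upwards [ae_restrict_mem measurableSet_Ioc] with x hx
      have hx0 : 0 < x := hx.1
      have hx4 : x ≤ 4 := hx.2
      have hgnn : 0 ≤ g x := by
        simp only [hg]
        positivity
      rw [Real.norm_eq_abs, abs_of_nonneg hgnn]
      have hs1 : Real.sqrt ((4 - x)/x) ≤ Real.sqrt (4/x) := by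
        apply Real.sqrt_le_sqrt
        rw [div_le_div_iff_of_pos_right hx0]
        linarith
      have hs2 : Real.sqrt (4/x) = 2 * x ^ (-(1/2) : ℝ) := by
        rw [Real.sqrt_div (by norm_num) x]
        have h4 : Real.sqrt 4 = 2 := by
          rw [show (4:ℝ) = 2^2 by norm_num, Real.sqrt_sq (by norm_num)]
        rw [h4, Real.rpow_neg hx0.le, Real.sqrt_eq_rpow]
        ring
      have hxn : x ^ n ≤ 4 ^ n := pow_le_pow_left₀ hx0.le hx4 n
      have hrnn : (0:ℝ) ≤ x ^ (-(1/2):ℝ) := Real.rpow_nonneg hx0.le _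
      calc x ^ n * (1 / (2*π)) * Real.sqrt ((4-x)/x)
          ≤ 4 ^ n * (1 / (2*π)) * (2 * x ^ (-(1/2):ℝ)) := by
            rw [← hs2]
            apply mul_le_mul (mul_le_mul_of_nonneg_right hxn (by positivity)) hs1
              (Real.sqrt_nonneg _) (by positivity)
        _ = 4 ^ n * (1/π) * x ^ (-(1/2):ℝ) := by field_simp
  -- substitution
  have hsub : (∫ θ in (0:ℝ)..(π/2), f' θ • (g ∘ f) θ) = ∫ x in (0:ℝ)..4, g x := by
    have := integral_comp_smul_deriv''' (a := 0) (b := π/2) (f := f) (f' := f') (g := g)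
      ?_ ?_ ?_ ?_ ?_
    · convert this using 2 <;> simp [hf]
    · exact (continuous_const.mul ((Real.continuous_sin).pow 2)).continuousOn
    · intro x hx
      exact (hderiv x).hasDerivWithinAt
    · -- continuity of g on f '' Ioo
      have himg : f '' Ioo (min 0 (π/2)) (max 0 (π/2)) ⊆ Ioi 0 := by
        rintro _ ⟨θ, hθ, rfl⟩
        rw [min_eq_left hab, max_eq_right hab] at hθ
        have hsin : 0 < Real.sin θ :=
          Real.sin_pos_of_pos_of_lt_pi hθ.1 (lt_of_lt_of_le hθ.2 (by linarith))
        simp only [hf, mem_Ioi]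
        positivity
      refine ContinuousOn.mono ?_ himg
      apply ContinuousOn.mul
      · exact ((continuousOn_id.pow n).mul continuousOn_const)
      · apply ContinuousOn.sqrt
        exact (continuousOn_const.sub continuousOn_id).div continuousOn_id
          (fun x hx => ne_of_gt hx)
    · -- integrability of g on image
      refine hg1.mono_set ?_
      rintro _ ⟨θ, hθ, rfl⟩
      have h1 : Real.sin θ ^ 2 ≤ 1 := by
        rw [← Real.sin_sq_add_cos_sq θ]; nlinarith [sq_nonneg (Real.cos θ)]
      constructor
      · simp only [hf]; positivity
      · simp only [hf]; nlinarith
    · -- integrability of substituted integrand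
      rw [uIcc_of_le hab, integrableOn_Icc_iff_integrableOn_Ioc]
      exact (hHcont.integrableOn_Ioc).congr_fun (fun θ hθ => (hEq θ hθ).symm) measurableSet_Ioc
  -- compute the θ-integral
  have hInt : (∫ θ in (0:ℝ)..(π/2), f' θ • (g ∘ f) θ)
      = 4^n * (4/π) * ((∫ θ in (0:ℝ)..(π/2), Real.sin θ ^ (2*n))
          - ∫ θ in (0:ℝ)..(π/2), Real.sin θ ^ (2*n+2)) := by
    have e1 : (∫ θ in (0:ℝ)..(π/2), f' θ • (g ∘ f) θ) = ∫ θ in (0:ℝ)..(π/2), H θ := by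
      rw [integral_of_le hab, integral_of_le hab]
      exact setIntegral_congr_fun measurableSet_Ioc hEq
    rw [e1]
    have e2 : ∀ θ : ℝ, H θ = 4^n * (4/π) * (Real.sin θ ^ (2*n) - Real.sin θ ^ (2*n+2)) := by
      intro θ
      simp only [hH, Real.cos_sq', pow_add]
      ring
    simp_rw [e2]
    rw [intervalIntegral.integral_const_mul, intervalIntegral.integral_sub] <;>
      first
        | rfl
        | exact (Real.continuous_sin.pow _).intervalIntegrable _ _
  -- put everything together
  rw [← hsub, hInt, show (2*n+2 : ℕ) = 2*(n+1) by ring, W_even, W_even]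
  have hn1 : ((n:ℝ) + 1) ≠ 0 := by positivity
  have hcb : ((n:ℝ) + 1) * Nat.centralBinom (n+1) = 2 * (2*n+1) * Nat.centralBinom n := by
    exact_mod_cast congrArg (Nat.cast : ℕ → ℝ) (Nat.succ_mul_centralBinom_succ n)
  have hcat : ((n:ℝ) + 1) * catalan n = Nat.centralBinom n := by
    exact_mod_cast congrArg (Nat.cast : ℕ → ℝ) (succ_mul_catalan_eq_centralBinom n)
  have hcb' : (Nat.centralBinom (n+1) : ℝ) = 2 * (2*n+1) * Nat.centralBinom n / ((n:ℝ)+1) := by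
    field_simp at hcb ⊢; linarith [hcb]
  have hcat' : (catalan n : ℝ) = (Nat.centralBinom n : ℝ) / ((n:ℝ)+1) := by
    field_simp; linarith [hcat]
  rw [hcat']
  push_cast
  rw [hcb']
  have h4 : (4:ℝ)^(n+1) = 4^n * 4 := by ring
  rw [h4]
  have h4n : ((4:ℝ)^n) ≠ 0 := by positivity
  field_simp
  ring
end

section
/- The function f_C(x) = (1/(2π))√((4-x)/x) on (0,4) is a probability density: ∫_0^4 (1/(2π))√((4-x)/x) dx = 1. -/
open Real MeasureTheory

lemma catalan_sqrt_four : Real.sqrt 4 = 2 := by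
  rw [show (4:ℝ) = 2 ^ 2 by norm_num, Real.sqrt_sq (by norm_num)]

lemma catalan_aux_integrable :
    IntervalIntegrable (fun x => Real.sqrt ((4 - x) / x)) volume 0 4 := by
  have h2 : IntervalIntegrable (fun x : ℝ => 2 * x ^ (-(1/2) : ℝ)) volume 0 4 :=
    (intervalIntegral.intervalIntegrable_rpow' (by norm_num)).const_mul 2
  apply h2.mono_fun
  · exact (Real.continuous_sqrt.measurable.comp
      ((measurable_const.sub measurable_id).div measurable_id)).aestronglyMeasurable
  · filter_upwards [MeasureTheory.ae_restrict_mem measurableSet_uIoc] with x hx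
    rw [Set.uIoc_of_le (by norm_num : (0:ℝ) ≤ 4)] at hx
    obtain ⟨hx0, hx4⟩ := hx
    have hrpow : x ^ (-(1/2) : ℝ) = 1 / Real.sqrt x := by
      rw [Real.rpow_neg hx0.le, ← Real.sqrt_eq_rpow, one_div]
    have hb : Real.sqrt ((4 - x) / x) ≤ 2 * x ^ (-(1/2) : ℝ) := by
      have h1 : (4 - x) / x ≤ 4 / x := by gcongr <;> linarith
      calc Real.sqrt ((4 - x) / x) ≤ Real.sqrt (4 / x) := Real.sqrt_le_sqrt h1
        _ = 2 / Real.sqrt x := by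
            rw [Real.sqrt_div (by norm_num : (0:ℝ) ≤ 4), catalan_sqrt_four]
        _ = 2 * x ^ (-(1/2) : ℝ) := by rw [hrpow]; ring
    rw [Real.norm_eq_abs, Real.norm_eq_abs, abs_of_nonneg (Real.sqrt_nonneg _),
      abs_of_nonneg (by positivity)]
    exact hb

lemma catalan_aux_deriv {x : ℝ} (hx0 : 0 < x) (hx4 : x < 4) :
    HasDerivAt (fun x => Real.sqrt (x * (4 - x)) + 2 * Real.arcsin (x / 2 - 1))
      (Real.sqrt ((4 - x) / x)) x := by
  have hs : 0 < x * (4 - x) := mul_pos hx0 (by linarith)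
  have hsqrt : HasDerivAt (fun x => Real.sqrt (x * (4 - x)))
      ((4 - 2 * x) / (2 * Real.sqrt (x * (4 - x)))) x := by
    have hinner : HasDerivAt (fun x : ℝ => x * (4 - x)) (4 - 2 * x) x := by
      have := (hasDerivAt_id x).mul ((hasDerivAt_const x (4:ℝ)).sub (hasDerivAt_id x))
      exact this.congr_deriv (by simp [id]; ring)
    have := (Real.hasDerivAt_sqrt hs.ne').comp x hinner
    exact this.congr_deriv (by ring)
  have harg : HasDerivAt (fun x : ℝ => x / 2 - 1) (1 / 2) x := by
    have := ((hasDerivAt_id x).div_const 2).sub_const 1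
    simpa using this
  have hne1 : x / 2 - 1 ≠ -1 := by intro h; nlinarith
  have hne2 : x / 2 - 1 ≠ 1 := by intro h; nlinarith
  have harcsin : HasDerivAt (fun x : ℝ => Real.arcsin (x / 2 - 1))
      (1 / Real.sqrt (1 - (x / 2 - 1) ^ 2) * (1 / 2)) x := by
    have := (Real.hasDerivAt_arcsin hne1 hne2).comp x harg
    exact this
  have h := hsqrt.add (harcsin.const_mul 2)
  refine h.congr_deriv (Eq.symm ?_)
  have h14 : 1 - (x / 2 - 1) ^ 2 = x * (4 - x) / 4 := by ring
  have hsx : (0:ℝ) < Real.sqrt x := Real.sqrt_pos.mpr hx0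
  have hs4 : (0:ℝ) < Real.sqrt (4 - x) := Real.sqrt_pos.mpr (by linarith)
  have e1 : Real.sqrt (x * (4 - x)) = Real.sqrt x * Real.sqrt (4 - x) :=
    Real.sqrt_mul hx0.le _
  have e2 : Real.sqrt (x * (4 - x) / 4) = Real.sqrt (x * (4 - x)) / 2 := by
    rw [Real.sqrt_div hs.le, catalan_sqrt_four]
  have e3 : Real.sqrt ((4 - x) / x) = Real.sqrt (4 - x) / Real.sqrt x :=
    Real.sqrt_div (by linarith) x
  rw [h14, e2, e1, e3]
  have hx2 : Real.sqrt x ^ 2 = x := Real.sq_sqrt hx0.le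
  have h42 : Real.sqrt (4 - x) ^ 2 = 4 - x := Real.sq_sqrt (by linarith)
  field_simp
  linear_combination 2 * h42

theorem catalan_density_integral_one :
    ∫ x in (0:ℝ)..4, (1 / (2 * π)) * Real.sqrt ((4 - x) / x) = 1 := by
  rw [intervalIntegral.integral_const_mul]
  have key : ∫ x in (0:ℝ)..4, Real.sqrt ((4 - x) / x) = 2 * π := by
    have h := intervalIntegral.integral_eq_sub_of_hasDerivAt_of_le
      (by norm_num : (0:ℝ) ≤ 4)
      (f := fun x => Real.sqrt (x * (4 - x)) + 2 * Real.arcsin (x / 2 - 1))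
      (f' := fun x => Real.sqrt ((4 - x) / x))
      (Continuous.continuousOn (by continuity))
      (fun x hx => catalan_aux_deriv hx.1 hx.2)
      catalan_aux_integrable
    rw [h]
    norm_num [Real.arcsin_one, Real.arcsin_neg_one]
    ring
  rw [key]
  field_simp
end

section
/- For every natural number n, ∫_0^4 x^n · (1/π) · 1/√(x(4-x)) dx = (2n choose n), the n-th central binomial coefficient. -/
open Real MeasureTheory Set intervalIntegral

lemma prod_wallis_eq (n : ℕ) :
    (∏ i ∈ Finset.range n, (2 * (i : ℝ) + 1) / (2 * i + 2))
      = Nat.centralBinom n / 4 ^ n := by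
  induction n with
  | zero => simp
  | succ k ih =>
    rw [Finset.prod_range_succ, ih]
    have h := Nat.succ_mul_centralBinom_succ k
    have h' : ((k : ℝ) + 1) * Nat.centralBinom (k + 1)
        = 2 * (2 * k + 1) * Nat.centralBinom k := by exact_mod_cast h
    have hk : ((k : ℝ) + 1) ≠ 0 := by positivity
    have h4 : (4 : ℝ) ^ k ≠ 0 := by positivity
    field_simp
    linear_combination (-2 * (4:ℝ)^k) * h'

lemma sin_pow_half (n : ℕ) :
    (∫ x in (0:ℝ)..(π/2), sin x ^ (2 * n))
      = π / 2 * (Nat.centralBinom n / 4 ^ n) := by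
  have hcont : ∀ a b : ℝ, IntervalIntegrable (fun x => sin x ^ (2 * n)) volume a b :=
    fun a b => (Continuous.pow (Real.continuous_sin) _).intervalIntegrable a b
  have hsym : (∫ x in (π/2)..π, sin x ^ (2 * n))
      = ∫ x in (0:ℝ)..(π/2), sin x ^ (2 * n) := by
    have : (∫ x in (π/2)..π, sin x ^ (2 * n))
        = ∫ x in (π/2)..π, sin (π - x) ^ (2 * n) := by
      refine intervalIntegral.integral_congr fun x _ => ?_
      rw [Real.sin_pi_sub]
    rw [this, intervalIntegral.integral_comp_sub_left (fun x => sin x ^ (2 * n)) π]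
    norm_num [sub_half]
  have hsplit : (∫ x in (0:ℝ)..π, sin x ^ (2 * n))
      = (∫ x in (0:ℝ)..(π/2), sin x ^ (2 * n)) + ∫ x in (π/2)..π, sin x ^ (2 * n) :=
    (intervalIntegral.integral_add_adjacent_intervals (hcont _ _) (hcont _ _)).symm
  have := integral_sin_pow_even (n := n)
  rw [prod_wallis_eq] at this
  rw [hsplit, hsym] at this
  linarith

theorem arcsine_density_moments (n : ℕ) :
    ∫ x in (0:ℝ)..4, x ^ n * (1 / π) * (1 / Real.sqrt (x * (4 - x)))
      = Nat.centralBinom n := by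
  have hpi : (0:ℝ) < π := pi_pos
  set f : ℝ → ℝ := fun θ => 4 * sin θ ^ 2 with hf
  set g : ℝ → ℝ := fun x => x ^ n * (1 / π) * (1 / Real.sqrt (x * (4 - x))) with hg
  have himg : f '' Ioo 0 (π/2) = Ioo (0:ℝ) 4 := by
    ext x
    constructor
    · rintro ⟨θ, ⟨h0, h1⟩, rfl⟩
      have hs0 : 0 < sin θ := Real.sin_pos_of_pos_of_lt_pi h0 (by linarith [pi_pos])
      have hs1 : sin θ < 1 := by
        have := Real.strictMonoOn_sin
          ⟨by linarith [pi_pos], by linarith⟩ ⟨by linarith [pi_pos], le_refl _⟩ h1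
        simpa using this
      constructor
      · simp only [hf]; positivity
      · simp only [hf]; nlinarith
    · intro ⟨hx0, hx4⟩
      refine ⟨Real.arcsin (Real.sqrt x / 2), ⟨?_, ?_⟩, ?_⟩
      · exact Real.arcsin_pos.2 (div_pos (Real.sqrt_pos.2 hx0) (by norm_num))
      · exact Real.arcsin_lt_pi_div_two.2 (by
          rw [div_lt_one (by norm_num)]
          calc Real.sqrt x < Real.sqrt 4 := Real.sqrt_lt_sqrt hx0.le hx4
          _ = 2 := by rw [show (4:ℝ) = 2^2 by norm_num, Real.sqrt_sq (by norm_num)])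
      · have h1 : Real.sqrt x / 2 ≤ 1 := by
          rw [div_le_one (by norm_num)]
          calc Real.sqrt x ≤ Real.sqrt 4 := Real.sqrt_le_sqrt hx4.le
          _ = 2 := by rw [show (4:ℝ) = 2^2 by norm_num, Real.sqrt_sq (by norm_num)]
        simp only [hf]
        rw [Real.sin_arcsin (le_trans (by norm_num) (by positivity : (0:ℝ) ≤ Real.sqrt x / 2)) h1]
        rw [div_pow, Real.sq_sqrt hx0.le]
        ring
  have hderiv : ∀ θ ∈ Ioo (0:ℝ) (π/2),
      HasDerivWithinAt f (8 * sin θ * cos θ) (Ioo 0 (π/2)) θ := by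
    intro θ _
    have h1 : HasDerivAt f (8 * sin θ * cos θ) θ := by
      have : HasDerivAt (fun y => 4 * sin y ^ 2) (4 * (↑(2:ℕ) * sin θ ^ (2 - 1) * cos θ)) θ :=
        ((Real.hasDerivAt_sin θ).pow 2).const_mul (4:ℝ)
      convert this using 1
      simp; ring
    exact h1.hasDerivWithinAt
  have hinj : InjOn f (Ioo 0 (π/2)) := by
    intro a ha b hb hab
    have hsa : 0 < sin a := Real.sin_pos_of_pos_of_lt_pi ha.1 (by linarith [ha.2, pi_pos])
    have hsb : 0 < sin b := Real.sin_pos_of_pos_of_lt_pi hb.1 (by linarith [hb.2, pi_pos])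
    have hsq : sin a ^ 2 = sin b ^ 2 := by
      simp only [hf] at hab; linarith
    have hss : sin a = sin b := by nlinarith
    exact Real.injOn_sin ⟨by linarith [ha.1, pi_pos], by linarith [ha.2]⟩
      ⟨by linarith [hb.1, pi_pos], by linarith [hb.2]⟩ hss
  have key : ∀ θ ∈ Ioo (0:ℝ) (π/2),
      |8 * sin θ * cos θ| • g (f θ) = 2 * 4 ^ n / π * sin θ ^ (2 * n) := by
    intro θ hθ
    have hs : 0 < sin θ := Real.sin_pos_of_pos_of_lt_pi hθ.1 (by linarith [hθ.2, pi_pos])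
    have hc : 0 < cos θ := Real.cos_pos_of_mem_Ioo ⟨by linarith [hθ.1, pi_pos], hθ.2⟩
    have habs : |8 * sin θ * cos θ| = 8 * sin θ * cos θ := abs_of_pos (by positivity)
    have hsimp : 4 * sin θ ^ 2 * (4 - 4 * sin θ ^ 2) = (4 * sin θ * cos θ) ^ 2 := by
      have := Real.sin_sq_add_cos_sq θ; nlinarith
    have hsqrt : Real.sqrt (4 * sin θ ^ 2 * (4 - 4 * sin θ ^ 2)) = 4 * sin θ * cos θ := by
      rw [hsimp, Real.sqrt_sq (by positivity)]
    have hpow : (4 * sin θ ^ 2) ^ n = 4 ^ n * sin θ ^ (2 * n) := by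
      rw [mul_pow, ← pow_mul]
    simp only [hg, hf, smul_eq_mul, habs, hsqrt, hpow]
    field_simp
    ring
  calc ∫ x in (0:ℝ)..4, x ^ n * (1 / π) * (1 / Real.sqrt (x * (4 - x)))
      = ∫ x in Ioc (0:ℝ) 4, g x := intervalIntegral.integral_of_le (by norm_num)
    _ = ∫ x in Ioo (0:ℝ) 4, g x := MeasureTheory.integral_Ioc_eq_integral_Ioo
    _ = ∫ x in f '' Ioo 0 (π/2), g x := by rw [himg]
    _ = ∫ θ in Ioo (0:ℝ) (π/2), |8 * sin θ * cos θ| • g (f θ) :=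
        integral_image_eq_integral_abs_deriv_smul measurableSet_Ioo hderiv hinj g
    _ = ∫ θ in Ioo (0:ℝ) (π/2), 2 * 4 ^ n / π * sin θ ^ (2 * n) :=
        MeasureTheory.setIntegral_congr_fun measurableSet_Ioo key
    _ = 2 * 4 ^ n / π * ∫ θ in Ioo (0:ℝ) (π/2), sin θ ^ (2 * n) :=
        MeasureTheory.integral_const_mul _ _
    _ = 2 * 4 ^ n / π * ∫ θ in (0:ℝ)..(π/2), sin θ ^ (2 * n) := by
        rw [intervalIntegral.integral_of_le (by positivity),
          MeasureTheory.integral_Ioc_eq_integral_Ioo]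
    _ = 2 * 4 ^ n / π * (π / 2 * (Nat.centralBinom n / 4 ^ n)) := by rw [sin_pow_half]
    _ = Nat.centralBinom n := by field_simp
end

section
/- For every positive integer k ≥ 2 and natural number n, the Fuss–Catalan number C_{k,n} = (1/(kn+1))·((k+1)n choose n) is a positive integer, and ((k+1)n choose n) = (kn+1)·C_{k,n}. -/
theorem fussCatalan_integer (k n : ℕ) (hk : 2 ≤ k) :
    (k * n + 1) ∣ Nat.choose ((k + 1) * n) n ∧
    0 < Nat.choose ((k + 1) * n) n / (k * n + 1) ∧
    Nat.choose ((k + 1) * n) n = (k * n + 1) * (Nat.choose ((k + 1) * n) n / (k * n + 1)) := by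
  have key := Nat.choose_mul_succ_eq ((k + 1) * n) n
  have hsub : (k + 1) * n + 1 - n = k * n + 1 := by
    have h : (k + 1) * n = k * n + n := by ring
    omega
  rw [hsub] at key
  have hcop : Nat.Coprime (k * n + 1) ((k + 1) * n + 1) := by
    have h1 : Nat.Coprime (k * n + 1) n := by
      simp [Nat.add_comm, Nat.mul_comm, Nat.coprime_add_mul_left_left 1 n k]
    have : (k + 1) * n + 1 = (k * n + 1) + n := by ring
    rw [this, Nat.add_comm (k * n + 1) n, Nat.coprime_add_self_right]
    exact h1
  have hdvd : (k * n + 1) ∣ Nat.choose ((k + 1) * n) n := by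
    have : (k * n + 1) ∣ Nat.choose ((k + 1) * n) n * ((k + 1) * n + 1) := by
      rw [key]; exact dvd_mul_left _ _
    exact (Nat.Coprime.dvd_of_dvd_mul_right hcop this)
  have hpos : 0 < Nat.choose ((k + 1) * n) n :=
    Nat.choose_pos (Nat.le_mul_of_pos_left n (by omega))
  refine ⟨hdvd, Nat.div_pos (Nat.le_of_dvd hpos hdvd) (by omega), ?_⟩
  exact (Nat.mul_div_cancel' hdvd).symm
end

section
/- Both Hankel determinants of the Catalan sequence equal 1: for every n, det[(C_{i+j})_{0≤i,j≤n}] = 1 and det[(C_{i+j+1})_{0≤i,j≤n}] = 1. -/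
open Finset

/-- `bb n h` = number of lattice paths of `n` ±1 steps from 0 to `h` staying nonnegative. -/
def bb : ℕ → ℕ → ℤ
  | 0, 0 => 1
  | 0, _ + 1 => 0
  | n + 1, 0 => bb n 1
  | n + 1, h + 1 => bb n h + bb n (h + 2)

lemma bb_zero_of_gt : ∀ n h, n < h → bb n h = 0
  | 0, 0, h => by omega
  | 0, _ + 1, _ => rfl
  | n + 1, 0, h => by omega
  | n + 1, h + 1, hlt => by
      rw [bb, bb_zero_of_gt n h (by omega), bb_zero_of_gt n (h + 2) (by omega)]
      ring

lemma bb_diag : ∀ n, bb n n = 1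
  | 0 => rfl
  | n + 1 => by rw [bb, bb_diag n, bb_zero_of_gt n (n + 2) (by omega)]; ring

lemma bb_closed : ∀ n h, bb n h =
    if h ≤ n ∧ (n + h) % 2 = 0 then
      ((n.choose ((n - h) / 2) : ℤ) - (n.choose ((n + h + 2) / 2) : ℤ))
    else 0
  | 0, 0 => by simp [bb]
  | 0, h + 1 => by simp [bb]
  | n + 1, 0 => by
      rw [bb, bb_closed n 1]
      by_cases hp : n % 2 = 1
      · obtain ⟨k, rfl⟩ : ∃ k, n = 2 * k + 1 := ⟨n / 2, by omega⟩
        rw [if_pos ⟨by omega, by omega⟩, if_pos ⟨by omega, by omega⟩]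
        have e1 : (2 * k + 1 - 1) / 2 = k := by omega
        have e2 : (2 * k + 1 + 1 + 2) / 2 = k + 2 := by omega
        have e4 : (2 * k + 1 + 1 - 0) / 2 = k + 1 := by omega
        rw [e1, e2, e4,
          Nat.choose_succ_succ (2 * k + 1) k, Nat.choose_succ_succ (2 * k + 1) (k + 1)]
        push_cast
        ring
      · rw [if_neg (by omega), if_neg (by omega)]
  | n + 1, h + 1 => by
      rw [bb, bb_closed n h, bb_closed n (h + 2)]
      by_cases hp : (n + h) % 2 = 1
      · rw [if_neg (by omega), if_neg (by omega), if_neg (by omega)]; ring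
      · by_cases hle : h + 2 ≤ n
        · obtain ⟨k, rfl⟩ : ∃ k, n = h + 2 * k + 2 := ⟨(n - h - 2) / 2, by omega⟩
          rw [if_pos ⟨by omega, by omega⟩, if_pos ⟨by omega, by omega⟩,
            if_pos ⟨by omega, by omega⟩]
          have e1 : (h + 2 * k + 2 - h) / 2 = k + 1 := by omega
          have e2 : (h + 2 * k + 2 + h + 2) / 2 = h + k + 2 := by omega
          have e3 : (h + 2 * k + 2 - (h + 2)) / 2 = k := by omega
          have e4 : (h + 2 * k + 2 + (h + 2) + 2) / 2 = h + k + 3 := by omega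
          have e5 : (h + 2 * k + 2 + 1 - (h + 1)) / 2 = k + 1 := by omega
          have e6 : (h + 2 * k + 2 + 1 + (h + 1) + 2) / 2 = h + k + 3 := by omega
          rw [e1, e2, e3, e4, e5, e6,
            Nat.choose_succ_succ (h + 2 * k + 2) k,
            Nat.choose_succ_succ (h + 2 * k + 2) (h + k + 2)]
          push_cast
          ring
        · by_cases hh : h = n
          · subst hh
            rw [if_pos ⟨by omega, by omega⟩, if_neg (by omega), if_pos ⟨by omega, by omega⟩]
            have e1 : (h - h) / 2 = 0 := by omega
            have e2 : (h + h + 2) / 2 = h + 1 := by omega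
            have e3 : (h + 1 - (h + 1)) / 2 = 0 := by omega
            have e4 : (h + 1 + (h + 1) + 2) / 2 = h + 2 := by omega
            rw [e1, e2, e3, e4, Nat.choose_eq_zero_of_lt (Nat.lt_succ_self h),
              Nat.choose_eq_zero_of_lt (Nat.lt_succ_self (h + 1))]
            simp
          · rw [if_neg (by omega), if_neg (by omega), if_neg (by omega)]
            ring

lemma bb_parity {n h : ℕ} (hp : (n + h) % 2 = 1) : bb n h = 0 := by
  rw [bb_closed, if_neg (by omega)]

lemma sum_shift (G : ℕ → ℤ) (N : ℕ) :
    ∑ h ∈ range N, G (h + 1) = ∑ h ∈ range N, G h + G N - G 0 := by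
  have h1 := Finset.sum_range_succ' G N
  have h2 := Finset.sum_range_succ G N
  linarith

lemma step (m l N : ℕ) (hN : m + l + 2 ≤ N) :
    ∑ h ∈ range N, bb m h * bb (l + 1) h = ∑ h ∈ range N, bb (m + 1) h * bb l h := by
  obtain ⟨N', rfl⟩ : ∃ N', N = N' + 1 := ⟨N - 1, by omega⟩
  rw [Finset.sum_range_succ' (fun h => bb m h * bb (l + 1) h) N',
      Finset.sum_range_succ' (fun h => bb (m + 1) h * bb l h) N']
  simp only [bb, zero_add]
  simp only [mul_add, add_mul, Finset.sum_add_distrib]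
  have hC := sum_shift (fun h => bb m h * bb l (h + 1)) N'
  have hD := sum_shift (fun h => bb m (h + 1) * bb l h) N'
  simp only [zero_add] at hC hD
  have z1 : bb m N' = 0 := bb_zero_of_gt _ _ (by omega)
  have z2 : bb l N' = 0 := bb_zero_of_gt _ _ (by omega)
  rw [z1] at hC
  rw [z2] at hD
  simp only [zero_mul, mul_zero] at hC hD
  linarith

lemma sum_bb : ∀ (l m N : ℕ), m + l + 2 ≤ N →
    ∑ h ∈ range N, bb m h * bb l h = bb (m + l) 0
  | 0, m, N, hN => by
      rw [Finset.sum_eq_single 0]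
      · simp [bb]
      · intro h _ h0
        obtain ⟨h', rfl⟩ : ∃ h', h = h' + 1 := ⟨h - 1, by omega⟩
        simp [bb]
      · intro habs
        exact absurd (mem_range.2 (by omega)) habs
  | l + 1, m, N, hN => by
      rw [step m l N (by omega), sum_bb l (m + 1) N (by omega)]
      have : m + 1 + l = m + (l + 1) := by omega
      rw [this]

lemma sum_bb' (m l N : ℕ) (hN : m + 1 ≤ N) :
    ∑ h ∈ range N, bb m h * bb l h = bb (m + l) 0 := by
  rw [← sum_bb l m (max N (m + l + 2)) (le_max_right _ _)]
  apply Finset.sum_subset (range_subset_range.2 (le_max_left _ _))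
  intro x _ hx
  rw [bb_zero_of_gt m x (by simp only [mem_range, not_lt] at hx; omega)]
  ring

lemma sum_range_two_mul (f : ℕ → ℤ) :
    ∀ N, ∑ h ∈ range (2 * N), f h = ∑ k ∈ range N, (f (2 * k) + f (2 * k + 1))
  | 0 => rfl
  | N + 1 => by
      rw [show 2 * (N + 1) = 2 * N + 1 + 1 by ring, Finset.sum_range_succ,
        Finset.sum_range_succ, Finset.sum_range_succ, sum_range_two_mul f N]
      ring

lemma catalan_eq_choose_sub (m : ℕ) :
    (catalan m : ℤ) = ((2 * m).choose m : ℤ) - ((2 * m).choose (m + 1) : ℤ) := by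
  have h1 : (m + 1) * catalan m = Nat.centralBinom m := succ_mul_catalan_eq_centralBinom m
  have h1' : ((m : ℤ) + 1) * (catalan m : ℤ) = ((2 * m).choose m : ℤ) := by
    rw [Nat.centralBinom] at h1
    exact_mod_cast h1
  have h2 : (2 * m).choose (m + 1) * (m + 1) = (2 * m).choose m * m := by
    have := Nat.choose_succ_right_eq (2 * m) m
    rwa [show 2 * m - m = m by omega] at this
  have h2' : ((2 * m).choose (m + 1) : ℤ) * ((m : ℤ) + 1) = ((2 * m).choose m : ℤ) * m := by
    exact_mod_cast h2
  have hpos : ((m : ℤ) + 1) ≠ 0 := by positivity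
  apply mul_left_cancel₀ hpos
  rw [h1']
  ring_nf
  ring_nf at h2'
  linarith

lemma bb_two_mul (m : ℕ) : bb (2 * m) 0 = (catalan m : ℤ) := by
  rw [bb_closed, if_pos ⟨by omega, by omega⟩, catalan_eq_choose_sub]
  have e1 : (2 * m - 0) / 2 = m := by omega
  have e2 : (2 * m + 0 + 2) / 2 = m + 1 := by omega
  rw [e1, e2]

lemma entry0 (n i j : ℕ) (hi : i ≤ n) (_hj : j ≤ n) :
    ∑ k ∈ range (n + 1), bb (2 * i) (2 * k) * bb (2 * j) (2 * k) = (catalan (i + j) : ℤ) := by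
  have h1 : ∑ k ∈ range (n + 1),
      (bb (2 * i) (2 * k) * bb (2 * j) (2 * k) + bb (2 * i) (2 * k + 1) * bb (2 * j) (2 * k + 1))
      = ∑ k ∈ range (n + 1), bb (2 * i) (2 * k) * bb (2 * j) (2 * k) := by
    apply Finset.sum_congr rfl
    intro k _
    rw [bb_parity (n := 2 * i) (h := 2 * k + 1) (by omega)]
    ring
  rw [← h1, ← sum_range_two_mul (fun h => bb (2 * i) h * bb (2 * j) h) (n + 1),
    sum_bb' (2 * i) (2 * j) (2 * (n + 1)) (by omega),
    show 2 * i + 2 * j = 2 * (i + j) by ring, bb_two_mul]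

lemma entry1 (n i j : ℕ) (hi : i ≤ n) (_hj : j ≤ n) :
    ∑ k ∈ range (n + 1), bb (2 * i + 1) (2 * k + 1) * bb (2 * j + 1) (2 * k + 1)
      = (catalan (i + j + 1) : ℤ) := by
  have h1 : ∑ k ∈ range (n + 1),
      (bb (2 * i + 1) (2 * k) * bb (2 * j + 1) (2 * k)
        + bb (2 * i + 1) (2 * k + 1) * bb (2 * j + 1) (2 * k + 1))
      = ∑ k ∈ range (n + 1), bb (2 * i + 1) (2 * k + 1) * bb (2 * j + 1) (2 * k + 1) := by
    apply Finset.sum_congr rfl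
    intro k _
    rw [bb_parity (n := 2 * i + 1) (h := 2 * k) (by omega)]
    ring
  rw [← h1, ← sum_range_two_mul (fun h => bb (2 * i + 1) h * bb (2 * j + 1) h) (n + 1),
    sum_bb' (2 * i + 1) (2 * j + 1) (2 * (n + 1)) (by omega),
    show 2 * i + 1 + (2 * j + 1) = 2 * (i + j + 1) by ring, bb_two_mul]

theorem catalan_hankel_det (n : ℕ) :
    Matrix.det (Matrix.of fun i j : Fin (n + 1) => (catalan ((i : ℕ) + (j : ℕ)) : ℤ)) = 1 ∧
    Matrix.det (Matrix.of fun i j : Fin (n + 1) => (catalan ((i : ℕ) + (j : ℕ) + 1) : ℤ)) = 1 := by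
  constructor
  · have hfac : (Matrix.of fun i j : Fin (n + 1) => (catalan ((i : ℕ) + (j : ℕ)) : ℤ))
        = (Matrix.of fun i k : Fin (n + 1) => bb (2 * (i : ℕ)) (2 * (k : ℕ))) *
          (Matrix.of fun i k : Fin (n + 1) => bb (2 * (i : ℕ)) (2 * (k : ℕ))).transpose := by
      ext i j
      simp only [Matrix.mul_apply, Matrix.transpose_apply, Matrix.of_apply]
      rw [Fin.sum_univ_eq_sum_range
        (fun k => bb (2 * (i : ℕ)) (2 * k) * bb (2 * (j : ℕ)) (2 * k))]
      exact (entry0 n i j i.is_le j.is_le).symm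
    have hdet : (Matrix.of fun i k : Fin (n + 1) => bb (2 * (i : ℕ)) (2 * (k : ℕ))).det = 1 := by
      rw [Matrix.det_of_lowerTriangular _ (fun i j hij => by
        have hij' : i < j := hij
        exact bb_zero_of_gt _ _ (by
          have : (i : ℕ) < (j : ℕ) := hij'
          omega))]
      simp [bb_diag]
    rw [hfac, Matrix.det_mul, Matrix.det_transpose, hdet]
    norm_num
  · have hfac : (Matrix.of fun i j : Fin (n + 1) => (catalan ((i : ℕ) + (j : ℕ) + 1) : ℤ))
        = (Matrix.of fun i k : Fin (n + 1) => bb (2 * (i : ℕ) + 1) (2 * (k : ℕ) + 1)) *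
          (Matrix.of fun i k : Fin (n + 1) => bb (2 * (i : ℕ) + 1) (2 * (k : ℕ) + 1)).transpose := by
      ext i j
      simp only [Matrix.mul_apply, Matrix.transpose_apply, Matrix.of_apply]
      rw [Fin.sum_univ_eq_sum_range
        (fun k => bb (2 * (i : ℕ) + 1) (2 * k + 1) * bb (2 * (j : ℕ) + 1) (2 * k + 1))]
      exact (entry1 n i j i.is_le j.is_le).symm
    have hdet : (Matrix.of fun i k : Fin (n + 1) => bb (2 * (i : ℕ) + 1) (2 * (k : ℕ) + 1)).det = 1 := by
      rw [Matrix.det_of_lowerTriangular _ (fun i j hij => by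
        have hij' : i < j := hij
        exact bb_zero_of_gt _ _ (by
          have : (i : ℕ) < (j : ℕ) := hij'
          omega))]
      simp [bb_diag]
    rw [hfac, Matrix.det_mul, Matrix.det_transpose, hdet]
    norm_num
end
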